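/- Every feasible dual solution lower-bounds the optimum: if (y, z) is a feasible solution of DP_k for an RBM instance I, then Σ_{i=1}^{n} y_i − Σ_{j=k+1}^{k+n} z_j ≤ opt_k(I). -/

import Mathlib

open MeasureTheory

/-- An RBM instance: `n` items, with the color of item `i ∈ {1,…,n}` given by `color i`. -/
structure RBMInstance where
  n : ℕ
  color : ℕ → ℕ

/-- A feasible schedule with buffer size `k`: a bijection `M` from the items `{1,…,n}`
to the output slots `{k+1,…,k+n}` with `M i > i`, preserving the input order
within each color. -/
def IsSchedule (k : ℕ) (inst : RBMInstance) (M : ℕ → ℕ) : Prop :=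
  Set.BijOn M (Set.Icc 1 inst.n) (Set.Icc (k + 1) (k + inst.n)) ∧
  (∀ i ∈ Set.Icc 1 inst.n, i < M i) ∧
  (∀ i ∈ Set.Icc 1 inst.n, ∀ i' ∈ Set.Icc 1 inst.n,
      i < i' → inst.color i = inst.color i' → M i < M i')

open Classical in
/-- The cost of a schedule: `1` plus the number of color changes between consecutive
output slots (and `0` if there are no items). -/
noncomputable def scheduleCost (k : ℕ) (inst : RBMInstance) (M : ℕ → ℕ) : ℕ :=
  if inst.n = 0 then 0
  else 1 + ((Finset.Icc (k + 1) (k + inst.n - 1)).filter fun j =>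
      ∃ i ∈ Finset.Icc 1 inst.n, ∃ i' ∈ Finset.Icc 1 inst.n,
        M i = j ∧ M i' = j + 1 ∧ inst.color i ≠ inst.color i').card

/-- The optimal (offline) cost of an RBM instance with buffer size `k`. -/
noncomputable def optCost (k : ℕ) (inst : RBMInstance) : ℕ :=
  sInf {v : ℕ | ∃ M, IsSchedule k inst M ∧ scheduleCost k inst M = v}

/-- A batch `(I, j)`: a nonempty set `I ⊆ {1,…,n}` of items of a single color containing
every item of that color between `min I` and `max I`, together with a starting output
slot `j ≥ k+1` such that the batch fits before slot `k+n` and the `r`-th smallest item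
`i_r` of `I` satisfies `i_r < j + r - 1`. -/
def IsBatch (k : ℕ) (inst : RBMInstance) (b : Finset ℕ × ℕ) : Prop :=
  b.1.Nonempty ∧ b.1 ⊆ Finset.Icc 1 inst.n ∧
  (∀ i ∈ b.1, ∀ i' ∈ b.1, inst.color i = inst.color i') ∧
  (∀ i' ∈ Finset.Icc 1 inst.n, (∃ a ∈ b.1, a ≤ i') → (∃ a ∈ b.1, i' ≤ a) →
      (∃ a ∈ b.1, inst.color i' = inst.color a) → i' ∈ b.1) ∧
  k + 1 ≤ b.2 ∧ b.2 + b.1.card - 1 ≤ k + inst.n ∧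
  (∀ s : ℕ, ∀ h : s < (b.1.sort (· ≤ ·)).length,
      (b.1.sort (· ≤ ·)).get ⟨s, h⟩ < b.2 + s)

open Classical in
/-- The (finite) set of all batches of an instance. -/
noncomputable def batches (k : ℕ) (inst : RBMInstance) : Finset (Finset ℕ × ℕ) :=
  ((Finset.Icc 1 inst.n).powerset ×ˢ Finset.Icc (k + 1) (k + inst.n)).filter
    (IsBatch k inst)

open Classical in
/-- Feasibility for the primal linear program `LP_k`: nonnegativity, the covering
constraints for every item, and the packing constraints for every output slot. -/
noncomputable def LPFeasible (k : ℕ) (inst : RBMInstance) (x : Finset ℕ × ℕ → ℝ) : Prop :=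
  (∀ b, 0 ≤ x b) ∧
  (∀ i ∈ Finset.Icc 1 inst.n,
      1 ≤ ∑ b ∈ (batches k inst).filter (fun b => i ∈ b.1), x b) ∧
  (∀ j ∈ Finset.Icc (k + 1) (k + inst.n),
      ∑ b ∈ (batches k inst).filter (fun b => b.2 ≤ j ∧ j < b.2 + b.1.card), x b ≤ 1)

/-- Feasibility for the dual linear program `DP_k`. -/
def DPFeasible (k : ℕ) (inst : RBMInstance) (y z : ℕ → ℝ) : Prop :=
  (∀ i, 0 ≤ y i) ∧ (∀ j, 0 ≤ z j) ∧
  ∀ b ∈ batches k inst,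
    ∑ i ∈ b.1, y i - ∑ j' ∈ Finset.Ico b.2 (b.2 + b.1.card), z j' ≤ 1

open Classical in
theorem key_bound (k : ℕ) (inst : RBMInstance)
    (y z : ℕ → ℝ) (hyz : DPFeasible k inst y z) (M : ℕ → ℕ) (hM : IsSchedule k inst M) :
    ∑ i ∈ Finset.Icc 1 inst.n, y i - ∑ j ∈ Finset.Icc (k + 1) (k + inst.n), z j ≤
      (((Finset.Icc (k+1) (k+inst.n)).filter
        (fun j => j = k+1 ∨ inst.color (Function.invFunOn M (Set.Icc 1 inst.n) (j-1))
            ≠ inst.color (Function.invFunOn M (Set.Icc 1 inst.n) j))).card : ℝ) := by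
  obtain ⟨hbij, hgt, hmono⟩ := hM
  set n := inst.n with hn
  set g := Function.invFunOn M (Set.Icc 1 n) with hg
  have hinv := hbij.invOn_invFunOn
  have hgM : ∀ i, 1 ≤ i → i ≤ n → g (M i) = i := fun i h1 h2 => hinv.1 ⟨h1, h2⟩
  have hMg : ∀ j, k+1 ≤ j → j ≤ k+n → M (g j) = j := fun j h1 h2 => hinv.2 ⟨h1, h2⟩
  have hgmem : ∀ j, k+1 ≤ j → j ≤ k+n → g j ∈ Finset.Icc 1 n := by
    intro j h1 h2
    have := hbij.surjOn.mapsTo_invFunOn (⟨h1, h2⟩ : j ∈ Set.Icc (k+1) (k+n))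
    simpa [Finset.mem_Icc] using this
  have hMmem : ∀ i, 1 ≤ i → i ≤ n → k+1 ≤ M i ∧ M i ≤ k+n := by
    intro i h1 h2
    have := hbij.mapsTo (⟨h1, h2⟩ : i ∈ Set.Icc 1 n)
    exact ⟨this.1, this.2⟩
  set c' : ℕ → ℕ := fun j => inst.color (g j) with hc'
  set isStart : ℕ → Prop := fun j => j = k+1 ∨ c' (j-1) ≠ c' j with hisStart
  -- main downward induction
  have key : ∀ d : ℕ, ∀ j : ℕ, k + n + 1 ≤ j + d → k + 1 ≤ j → j ≤ k + n + 1 →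
      (j = k + n + 1 ∨ isStart j) →
      ∑ i ∈ (Finset.Icc 1 n).filter (fun i => j ≤ M i), y i
        - ∑ j' ∈ Finset.Ico j (k+n+1), z j'
        ≤ (((Finset.Ico j (k+n+1)).filter isStart).card : ℝ) := by
    intro d
    induction d using Nat.strong_induction_on with
    | _ d IH =>
      intro j hd hj1 hj2 hstart
      rcases eq_or_lt_of_le hj2 with hjeq | hjlt
      · -- base case j = k+n+1
        have h1 : (Finset.Icc 1 n).filter (fun i => j ≤ M i) = ∅ := by
          apply Finset.filter_false_of_mem
          intro i hi
          simp only [Finset.mem_Icc] at hi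
          have := (hMmem i hi.1 hi.2).2
          omega
        have h2 : Finset.Ico j (k+n+1) = ∅ := by
          apply Finset.Ico_eq_empty; omega
        rw [h1, h2]
        simp
      · -- inductive case : j ≤ k + n, j is a start
        have hjle : j ≤ k + n := by omega
        have hstart' : isStart j := hstart.resolve_left (by omega)
        set S : Set ℕ := {j' | j < j' ∧ (j' = k+n+1 ∨ isStart j')} with hS
        have hSne : S.Nonempty := ⟨k+n+1, by refine ⟨by omega, Or.inl rfl⟩⟩
        set j₂ := sInf S with hj₂
        have hj₂mem : j₂ ∈ S := Nat.sInf_mem hSne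
        have hj₂mem' : j < j₂ ∧ (j₂ = k+n+1 ∨ isStart j₂) := hj₂mem
        have hj₂lt : j < j₂ := hj₂mem'.1
        have hj₂le : j₂ ≤ k + n + 1 := Nat.sInf_le (by refine ⟨by omega, Or.inl rfl⟩)
        have hNoStart : ∀ a, j < a → a < j₂ → ¬ isStart a := by
          intro a h1 h2 h3
          have hmem : a ∈ S := by refine ⟨h1, Or.inr h3⟩
          exact absurd (Nat.sInf_le hmem) (by omega)
        -- color constancy on the run
        have hconst : ∀ a, j ≤ a → a < j₂ → c' a = c' j := by
          intro a
          induction a with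
          | zero => intro h1 _; omega
          | succ a iha =>
            intro h1 h2
            rcases eq_or_lt_of_le h1 with h | h
            · rw [← h]
            · have ha1 : j ≤ a := by omega
              have hns := hNoStart (a+1) (by omega) h2
              have : ¬ (a + 1 = k + 1 ∨ c' a ≠ c' (a+1)) := by
                simpa [hisStart] using hns
              push_neg at this
              rw [← this.2]
              exact iha ha1 (by omega)
        set R : Finset ℕ := Finset.Ico j j₂ with hR
        have hRsub : ∀ a ∈ R, k + 1 ≤ a ∧ a ≤ k + n := by
          intro a ha; rw [hR, Finset.mem_Ico] at ha; omega
        set I : Finset ℕ := R.image g with hI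
        have hginjR : Set.InjOn g R := by
          intro a ha b hb hab
          have ha' := hRsub a ha
          have hb' := hRsub b hb
          rw [← hMg a ha'.1 ha'.2, ← hMg b hb'.1 hb'.2, hab]
        have hIcard : I.card = j₂ - j := by
          rw [hI, Finset.card_image_of_injOn hginjR, hR, Nat.card_Ico]
        have hIsub : I ⊆ Finset.Icc 1 n := by
          intro a ha
          rw [hI, Finset.mem_image] at ha
          obtain ⟨b, hb, rfl⟩ := ha
          have := hRsub b hb
          exact hgmem b this.1 this.2
        have hIcol : ∀ a ∈ I, inst.color a = c' j := by
          intro a ha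
          rw [hI, Finset.mem_image] at ha
          obtain ⟨b, hb, rfl⟩ := ha
          rw [hR, Finset.mem_Ico] at hb
          exact hconst b hb.1 hb.2
        have hMI : ∀ a ∈ I, M a ∈ R := by
          intro a ha
          rw [hI, Finset.mem_image] at ha
          obtain ⟨b, hb, rfl⟩ := ha
          have := hRsub b hb
          rw [hMg b this.1 this.2]
          exact hb
        -- equality of I with filter description
        have hIfilter : I = (Finset.Icc 1 n).filter (fun i => j ≤ M i ∧ M i < j₂) := by
          apply Finset.ext
          intro a
          constructor
          · intro ha
            have hMa := hMI a ha
            rw [hR, Finset.mem_Ico] at hMa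
            rw [Finset.mem_filter]
            exact ⟨hIsub ha, hMa⟩
          · intro ha
            rw [Finset.mem_filter, Finset.mem_Icc] at ha
            rw [hI, Finset.mem_image]
            refine ⟨M a, ?_, hgM a ha.1.1 ha.1.2⟩
            rw [hR, Finset.mem_Ico]
            exact ha.2
        -- the batch
        have hbatch : (I, j) ∈ batches k inst := by
          rw [batches, Finset.mem_filter, Finset.mem_product]
          refine ⟨⟨Finset.mem_powerset.mpr hIsub, Finset.mem_Icc.mpr ⟨hj1, by omega⟩⟩, ?_⟩
          refine ⟨⟨g j, ?_⟩, hIsub, ?_, ?_, hj1, ?_, ?_⟩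
          · rw [hI, Finset.mem_image]
            exact ⟨j, by rw [hR, Finset.mem_Ico]; omega, rfl⟩
          · intro a ha b hb
            rw [hIcol a ha, hIcol b hb]
          · -- closure
            rintro i' hi' ⟨al, hal, hal'⟩ ⟨ah, hah, hah'⟩ ⟨a, ha, hcol⟩
            rw [Finset.mem_Icc] at hi'
            have hMal := hMI al hal
            have hMah := hMI ah hah
            rw [hR, Finset.mem_Ico] at hMal hMah
            have hcl : inst.color i' = c' j := by rw [hcol, hIcol a ha]
            have hMlo : j ≤ M i' := by
              rcases eq_or_lt_of_le hal' with h | h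
              · rw [← h]; exact hMal.1
              · have : M al < M i' := by
                  refine hmono al ?_ i' ⟨hi'.1, hi'.2⟩ h ?_
                  · have := hIsub hal; rw [Finset.mem_Icc] at this; exact ⟨this.1, this.2⟩
                  · rw [hIcol al hal, hcl]
                omega
            have hMhi : M i' < j₂ := by
              rcases eq_or_lt_of_le hah' with h | h
              · rw [h]; exact hMah.2
              · have : M i' < M ah := by
                  refine hmono i' ⟨hi'.1, hi'.2⟩ ah ?_ h ?_
                  · have := hIsub hah; rw [Finset.mem_Icc] at this; exact ⟨this.1, this.2⟩
                  · rw [hcl, hIcol ah hah]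
                omega
            rw [hIfilter, Finset.mem_filter, Finset.mem_Icc]
            exact ⟨⟨hi'.1, hi'.2⟩, hMlo, hMhi⟩
          · rw [hIcard]; omega
          · -- sorted condition
            intro s hs
            have hlen : (I.sort (· ≤ ·)).length = j₂ - j := by
              rw [Finset.length_sort, hIcard]
            -- the sorted list is exactly [g j, g (j+1), ..., g (j₂-1)]
            have hsorteq : I.sort (· ≤ ·) = (List.range (j₂ - j)).map (fun r => g (j + r)) := by
              refine (fun hp h1 h2 => List.Perm.eq_of_pairwise' (r := (· ≤ ·)) h1 h2 hp) ?_ ?_ ?_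
              · rw [List.perm_ext_iff_of_nodup (Finset.sort_nodup _ _)]
                · intro a
                  rw [Finset.mem_sort, List.mem_map]
                  constructor
                  · intro ha
                    rw [hI, Finset.mem_image] at ha
                    obtain ⟨b, hb, rfl⟩ := ha
                    rw [hR, Finset.mem_Ico] at hb
                    exact ⟨b - j, List.mem_range.mpr (by omega), by congr 1; omega⟩
                  · rintro ⟨r, hr, rfl⟩
                    rw [List.mem_range] at hr
                    rw [hI, Finset.mem_image]
                    exact ⟨j + r, by rw [hR, Finset.mem_Ico]; omega, rfl⟩
                · -- nodup of the mapped list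
                  apply List.Nodup.map_on
                  · intro a ha b hb hab
                    rw [List.mem_range] at ha hb
                    have h1 : (j+a : ℕ) ∈ (R : Set ℕ) := by rw [hR]; simp only [Finset.coe_Ico, Set.mem_Ico]; omega
                    have h2 : (j+b : ℕ) ∈ (R : Set ℕ) := by rw [hR]; simp only [Finset.coe_Ico, Set.mem_Ico]; omega
                    have := hginjR h1 h2 hab
                    omega
                  · exact List.nodup_range
              · exact Finset.pairwise_sort _ _
              · -- sortedness of mapped list
                rw [List.pairwise_map]
                have hgm : ∀ a b, a ∈ List.range (j₂ - j) → b ∈ List.range (j₂ - j) →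
                    a < b → g (j + a) < g (j + b) := by
                  intro a b ha hb hab
                  rw [List.mem_range] at ha hb
                  have hma : j + a ∈ R := by rw [hR, Finset.mem_Ico]; omega
                  have hmb : j + b ∈ R := by rw [hR, Finset.mem_Ico]; omega
                  have hga := hgmem (j+a) (hRsub _ hma).1 (hRsub _ hma).2
                  have hgb := hgmem (j+b) (hRsub _ hmb).1 (hRsub _ hmb).2
                  rw [Finset.mem_Icc] at hga hgb
                  have hMa := hMg (j+a) (hRsub _ hma).1 (hRsub _ hma).2
                  have hMb := hMg (j+b) (hRsub _ hmb).1 (hRsub _ hmb).2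
                  rcases lt_trichotomy (g (j+a)) (g (j+b)) with h | h | h
                  · exact h
                  · exfalso; have : j + a = j + b := by rw [← hMa, ← hMb, h]
                    omega
                  · exfalso
                    have hcab : inst.color (g (j+b)) = inst.color (g (j+a)) := by
                      have h1 : c' (j+a) = c' j := hconst _ (by omega) (by omega)
                      have h2 : c' (j+b) = c' j := hconst _ (by omega) (by omega)
                      simp only [hc'] at h1 h2
                      rw [h1, h2]
                    have := hmono (g (j+b)) ⟨hgb.1, hgb.2⟩ (g (j+a)) ⟨hga.1, hga.2⟩ h hcab
                    rw [hMa, hMb] at this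
                    omega
                refine List.Pairwise.imp_of_mem ?_ List.pairwise_lt_range
                intro a b ha hb hab
                exact le_of_lt (hgm a b ha hb hab)
            have hs' : s < j₂ - j := by rwa [hlen] at hs
            have hval : (I.sort (· ≤ ·)).get ⟨s, hs⟩ = g (j + s) := by
              rw [List.get_of_eq hsorteq ⟨s, hs⟩]
              simp
            rw [hval]
            have hms : j + s ∈ R := by rw [hR, Finset.mem_Ico]; omega
            have := hgt (g (j+s)) (by
              have := hgmem (j+s) (hRsub _ hms).1 (hRsub _ hms).2
              rw [Finset.mem_Icc] at this
              exact ⟨this.1, this.2⟩)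
            rw [hMg (j+s) (hRsub _ hms).1 (hRsub _ hms).2] at this
            omega
        -- the dual constraint for this batch
        have hcon := hyz.2.2 (I, j) hbatch
        simp only at hcon
        rw [hIcard] at hcon
        have hIco : j + (j₂ - j) = j₂ := by omega
        rw [hIco] at hcon
        -- split sums
        have hzsplit : ∑ j' ∈ Finset.Ico j (k+n+1), z j'
            = ∑ j' ∈ Finset.Ico j j₂, z j' + ∑ j' ∈ Finset.Ico j₂ (k+n+1), z j' := by
          rw [Finset.sum_Ico_consecutive _ (by omega) (by omega)]
        have hysplit : ∑ i ∈ (Finset.Icc 1 n).filter (fun i => j ≤ M i), y i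
            = ∑ i ∈ I, y i + ∑ i ∈ (Finset.Icc 1 n).filter (fun i => j₂ ≤ M i), y i := by
          have h1 : (Finset.Icc 1 n).filter (fun i => j ≤ M i)
              = I ∪ (Finset.Icc 1 n).filter (fun i => j₂ ≤ M i) := by
            rw [hIfilter]
            apply Finset.ext
            intro a
            simp only [Finset.mem_union, Finset.mem_filter, Finset.mem_Icc]
            constructor
            · intro ⟨h1, h2⟩
              rcases lt_or_ge (M a) j₂ with h | h
              · exact Or.inl ⟨h1, h2, h⟩
              · exact Or.inr ⟨h1, h⟩
            · rintro (⟨h1, h2, _⟩ | ⟨h1, h2⟩)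
              · exact ⟨h1, h2⟩
              · exact ⟨h1, by omega⟩
          have h2 : Disjoint I ((Finset.Icc 1 n).filter (fun i => j₂ ≤ M i)) := by
            rw [hIfilter, Finset.disjoint_filter]
            intro a _ ha
            omega
          rw [h1, Finset.sum_union h2]
        -- split starts count
        have hssplit : ((Finset.Ico j (k+n+1)).filter isStart).card
            = 1 + ((Finset.Ico j₂ (k+n+1)).filter isStart).card := by
          rw [← Finset.Ico_union_Ico_eq_Ico (le_of_lt hj₂lt) hj₂le, Finset.filter_union,
            Finset.card_union_of_disjoint]
          · congr 1
            have : (Finset.Ico j j₂).filter isStart = {j} := by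
              apply Finset.ext
              intro a
              simp only [Finset.mem_filter, Finset.mem_Ico, Finset.mem_singleton]
              constructor
              · intro ⟨⟨h1, h2⟩, h3⟩
                by_contra h
                exact hNoStart a (by omega) h2 h3
              · rintro rfl
                exact ⟨⟨le_refl _, hj₂lt⟩, hstart'⟩
            rw [this, Finset.card_singleton]
          · apply Finset.disjoint_filter_filter
            exact Finset.Ico_disjoint_Ico_consecutive _ _ _
        -- apply IH
        have hIH := IH (k + n + 1 - j₂) (by omega) j₂ (by omega) (by omega) hj₂le
          hj₂mem'.2
        rw [hysplit, hzsplit, hssplit]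
        push_cast
        linarith
  -- conclude
  have hfin := key (k + n + 1) (k+1) (by omega) (le_refl _) (by omega) (Or.inr (Or.inl rfl))
  have h1 : (Finset.Icc 1 n).filter (fun i => k+1 ≤ M i) = Finset.Icc 1 n := by
    apply Finset.filter_true_of_mem
    intro i hi
    rw [Finset.mem_Icc] at hi
    exact (hMmem i hi.1 hi.2).1
  have h2 : Finset.Ico (k+1) (k+n+1) = Finset.Icc (k+1) (k+n) := by
    rw [Finset.Ico_add_one_right_eq_Icc]
  rw [h1, h2] at hfin
  convert hfin using 4


open Classical in
theorem count_eq (k : ℕ) (inst : RBMInstance) (M : ℕ → ℕ) (hM : IsSchedule k inst M) :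
    (((Finset.Icc (k+1) (k+inst.n)).filter
        (fun j => j = k+1 ∨ inst.color (Function.invFunOn M (Set.Icc 1 inst.n) (j-1))
            ≠ inst.color (Function.invFunOn M (Set.Icc 1 inst.n) j))).card : ℕ)
    = scheduleCost k inst M := by
  obtain ⟨hbij, hgt, hmono⟩ := hM
  set n := inst.n with hn
  set g := Function.invFunOn M (Set.Icc 1 n) with hg
  have hinv := hbij.invOn_invFunOn
  have hgM : ∀ i, 1 ≤ i → i ≤ n → g (M i) = i := fun i h1 h2 => hinv.1 ⟨h1, h2⟩
  have hMg : ∀ j, k+1 ≤ j → j ≤ k+n → M (g j) = j := fun j h1 h2 => hinv.2 ⟨h1, h2⟩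
  have hgmem : ∀ j, k+1 ≤ j → j ≤ k+n → g j ∈ Finset.Icc 1 n := by
    intro j h1 h2
    have := hbij.surjOn.mapsTo_invFunOn (⟨h1, h2⟩ : j ∈ Set.Icc (k+1) (k+n))
    simpa [Finset.mem_Icc] using this
  rcases Nat.eq_zero_or_pos n with h0 | hpos
  · rw [scheduleCost, if_pos h0, h0]
    convert Finset.card_empty
    apply Finset.eq_empty_of_forall_notMem
    intro a ha
    rw [Finset.mem_filter, Finset.mem_Icc] at ha
    omega
  · rw [scheduleCost, if_neg (by omega)]
    -- the equivalence of the change predicates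
    have hPiff : ∀ j, k+1 ≤ j → j ≤ k+n-1 →
        ((∃ i ∈ Finset.Icc 1 n, ∃ i' ∈ Finset.Icc 1 n,
          M i = j ∧ M i' = j + 1 ∧ inst.color i ≠ inst.color i')
         ↔ inst.color (g j) ≠ inst.color (g (j+1))) := by
      intro j h1 h2
      have hj1 : j ≤ k + n := by omega
      have hj2 : j + 1 ≤ k + n := by omega
      constructor
      · rintro ⟨i, hi, i', hi', rfl, hMi', hne⟩
        rw [Finset.mem_Icc] at hi hi'
        rw [hgM i hi.1 hi.2, ← hMi', hgM i' hi'.1 hi'.2]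
        exact hne
      · intro hne
        exact ⟨g j, hgmem j h1 hj1, g (j+1), hgmem (j+1) (by omega) hj2,
          hMg j h1 hj1, hMg (j+1) (by omega) hj2, hne⟩
    have hsplit : Finset.Icc (k+1) (k+n) = insert (k+1) (Finset.Icc (k+2) (k+n)) := by
      apply Finset.ext; intro a
      rw [Finset.mem_insert, Finset.mem_Icc, Finset.mem_Icc]
      omega
    rw [hsplit, Finset.filter_insert, if_pos (Or.inl rfl),
      Finset.card_insert_of_notMem (by
        intro h
        have := Finset.mem_of_mem_filter _ h
        rw [Finset.mem_Icc] at this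
        omega)]
    have himg : (Finset.Icc (k+2) (k+n)).filter
        (fun j => j = k+1 ∨ inst.color (g (j-1)) ≠ inst.color (g j))
        = Finset.image (· + 1) ((Finset.Icc (k + 1) (k + n - 1)).filter fun j =>
          ∃ i ∈ Finset.Icc 1 n, ∃ i' ∈ Finset.Icc 1 n,
            M i = j ∧ M i' = j + 1 ∧ inst.color i ≠ inst.color i') := by
      apply Finset.ext; intro a
      rw [Finset.mem_filter, Finset.mem_Icc, Finset.mem_image]
      constructor
      · rintro ⟨⟨h1, h2⟩, h3⟩
        have h3' : inst.color (g (a-1)) ≠ inst.color (g a) := by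
          rcases h3 with h | h
          · omega
          · exact h
        refine ⟨a - 1, ?_, by omega⟩
        simp only [Finset.mem_filter]
        refine ⟨Finset.mem_Icc.mpr ⟨by omega, by omega⟩, ?_⟩
        rw [hPiff (a-1) (by omega) (by omega)]
        have : a - 1 + 1 = a := by omega
        rw [this]
        exact h3'
      · rintro ⟨j, hj, rfl⟩
        simp only [Finset.mem_filter] at hj
        obtain ⟨hjm, h3⟩ := hj
        rw [Finset.mem_Icc] at hjm
        obtain ⟨h1, h2⟩ := hjm
        rw [hPiff j h1 h2] at h3
        refine ⟨⟨by omega, by omega⟩, Or.inr ?_⟩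
        have : j + 1 - 1 = j := by omega
        rw [this]
        exact h3
    rw [himg, Finset.card_image_of_injective _ (add_left_injective 1), Nat.add_comm]

theorem exists_schedule (k : ℕ) (hk : 1 ≤ k) (inst : RBMInstance) :
    IsSchedule k inst (fun i => i + k) := by
  refine ⟨⟨?_, ?_, ?_⟩, ?_, ?_⟩
  · intro i hi
    simp only [Set.mem_Icc] at hi ⊢
    omega
  · intro a _ b _ h
    simpa using h
  · intro j hj
    simp only [Set.mem_Icc] at hj
    refine ⟨j - k, ?_, ?_⟩
    · simp only [Set.mem_Icc]; omega
    · simp only; omega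
  · intro i _
    simp only
    omega
  · intro i _ i' _ h _
    simp only
    omega


/-- Every feasible dual solution lower-bounds the optimum: if `(y, z)`
is feasible for `DP_k`, then `Σ_i y_i − Σ_{j=k+1}^{k+n} z_j ≤ opt_k(I)`. -/
theorem dual_lower_bounds_opt (k : ℕ) (hk : 1 ≤ k) (inst : RBMInstance)
    (y z : ℕ → ℝ) (hyz : DPFeasible k inst y z) :
    ∑ i ∈ Finset.Icc 1 inst.n, y i - ∑ j ∈ Finset.Icc (k + 1) (k + inst.n), z j ≤
      (optCost k inst : ℝ) := by
  have hne : {v : ℕ | ∃ M, IsSchedule k inst M ∧ scheduleCost k inst M = v}.Nonempty :=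
    ⟨scheduleCost k inst (fun i => i + k), fun i => i + k, exists_schedule k hk inst, rfl⟩
  obtain ⟨M, hM, hcost⟩ := Nat.sInf_mem hne
  have h1 := key_bound k inst y z hyz M hM
  refine h1.trans (le_of_eq ?_)
  norm_cast
  rw [optCost, ← hcost, ← count_eq k inst M hM]
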